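/- Let K be a locally finitely presentable category and T, S finitary monads on K whose coproduct T ⊔ S is algebraic, i.e. K^{T⊔S} ≅ K^T ×_K K^S over K. Then the projection functor p₁ : K^T ×_K K^S → K^S is monadic. -/

import Mathlib

open CategoryTheory Limits Opposite

universe w w' v v₁ v₂ v₃ u u₁ u₂ u₃

namespace Formal

section Pullback

variable {A : Type u₁} {B : Type u₂} {K : Type u₃}
  [Category.{v₁} A] [Category.{v₂} B] [Category.{v₃} K]

/-- The strict pullback of two functors in the category of categories:
objects are pairs `(a, b)` with `U.obj a = V.obj b`. -/
structure CatPullback (U : A ⥤ K) (V : B ⥤ K) : Type max u₁ u₂ where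
  left : A
  right : B
  w : U.obj left = V.obj right

@[ext]
structure CatPullbackHom {U : A ⥤ K} {V : B ⥤ K} (X Y : CatPullback U V) where
  fl : X.left ⟶ Y.left
  fr : X.right ⟶ Y.right
  w : U.map fl ≫ eqToHom Y.w = eqToHom X.w ≫ V.map fr

instance (U : A ⥤ K) (V : B ⥤ K) : Category (CatPullback U V) where
  Hom := CatPullbackHom
  id X := ⟨𝟙 _, 𝟙 _, by simp⟩
  comp f g := ⟨f.fl ≫ g.fl, f.fr ≫ g.fr, by
    rw [Functor.map_comp, Functor.map_comp, Category.assoc, g.w, ← Category.assoc, f.w,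
      Category.assoc]⟩

/-- First projection of the pullback of categories. -/
def CatPullback.π₁ (U : A ⥤ K) (V : B ⥤ K) : CatPullback U V ⥤ A where
  obj X := X.left
  map f := f.fl

/-- Second projection of the pullback of categories. -/
def CatPullback.π₂ (U : A ⥤ K) (V : B ⥤ K) : CatPullback U V ⥤ B where
  obj X := X.right
  map f := f.fr

/-- The diagonal of the pullback square of categories. -/
def CatPullback.diag (U : A ⥤ K) (V : B ⥤ K) : CatPullback U V ⥤ K :=
  CatPullback.π₁ U V ⋙ U

end Pullback

section LFP

variable {C : Type u} [Category.{v} C]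

/-- An object is finitely presentable if its covariant hom-functor preserves
filtered colimits. -/
def FinitelyPresentable (X : C) : Prop :=
  PreservesFilteredColimitsOfSize.{v, v} (coyoneda.obj (op X))

/-- A category is locally finitely presentable if it is cocomplete and has a small
detecting (strong generating) set of finitely presentable objects. -/
def LocallyFinitelyPresentable (C : Type u) [Category.{v} C] : Prop :=
  HasColimitsOfSize.{v, v} C ∧
    ∃ S : Set C, Small.{v} S ∧ (∀ X ∈ S, FinitelyPresentable X) ∧ ObjectProperty.IsDetecting S

/-- A monad is finitary if its underlying endofunctor preserves filtered colimits. -/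
def Monad.Finitary (T : CategoryTheory.Monad C) : Prop :=
  PreservesFilteredColimitsOfSize.{v, v} (T : C ⥤ C)

end LFP
section Cardinal

variable {C : Type u} [Category.{v} C] {D : Type u₁} [Category.{v₁} D]

/-- A category is `κ`-filtered if every diagram of size `< κ` admits a cocone. -/
def IsCardinalFiltered (J : Type u) [Category.{v} J] (κ : Cardinal.{w}) : Prop :=
  ∀ (D : Type w) [SmallCategory D], Cardinal.mk (Σ X Y : D, X ⟶ Y) < κ →
    ∀ F : D ⥤ J, Nonempty (Cocone F)

/-- A functor preserves `κ`-filtered colimits. -/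
def PreservesCardinalFilteredColimits (F : C ⥤ D) (κ : Cardinal.{w}) : Prop :=
  ∀ (J : Type w) [SmallCategory J], IsCardinalFiltered J κ → PreservesColimitsOfShape J F

/-- An object is `κ`-presentable if its hom-functor preserves `κ`-filtered colimits. -/
def CardinalPresentable (X : C) (κ : Cardinal.{v}) : Prop :=
  PreservesCardinalFilteredColimits (coyoneda.obj (op X)) κ

/-- A category is locally `κ`-presentable if it is cocomplete and has a small detecting
(strong generating) set of `κ`-presentable objects. -/
def LocallyCardinalPresentable (C : Type u) [Category.{v} C] (κ : Cardinal.{v}) : Prop :=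
  HasColimitsOfSize.{v, v} C ∧
    ∃ S : Set C, Small.{v} S ∧ (∀ X ∈ S, CardinalPresentable X κ) ∧ ObjectProperty.IsDetecting S

/-- A category is locally presentable if it is locally `κ`-presentable for some
regular cardinal `κ`. -/
def LocallyPresentable (C : Type u) [Category.{v} C] : Prop :=
  ∃ κ : Cardinal.{v}, κ.IsRegular ∧ LocallyCardinalPresentable C κ

end Cardinal

section Aux
set_option linter.unusedSectionVars false


section ChainCoeq

variable {C : Type u} [Category.{v} C] (M : CategoryTheory.Monad C)
variable [HasColimitsOfShape ℕ C] [HasCoequalizers C]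

/-- extension of a Kleisli-type map to a morphism of free algebras -/
def ext' {X Y : C} (u : X ⟶ M.obj Y) : M.free.obj X ⟶ M.free.obj Y where
  f := M.map u ≫ M.μ.app Y
  h := by
    show M.map (M.map u ≫ M.μ.app Y) ≫ M.μ.app Y = M.μ.app X ≫ M.map u ≫ M.μ.app Y
    simp only [Monad.free_obj_a, Functor.map_comp, Category.assoc]
    rw [M.assoc Y, ← Functor.comp_map, M.μ.naturality_assoc u]

@[simp] lemma ext'_f {X Y : C} (u : X ⟶ M.obj Y) :
    (ext' M u).f = M.map u ≫ M.μ.app Y := rfl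

/-- determination of an algebra morphism out of a free algebra by its adjunct -/
lemma freeHom_f {Y : C} {W : M.Algebra} (k : M.free.obj Y ⟶ W) :
    k.f = M.map (M.η.app Y ≫ k.f) ≫ W.a := by
  erw [Functor.map_comp, Category.assoc, k.h]
  erw [Monad.right_unit_assoc]

lemma freeHom_ext {Y : C} {W : M.Algebra} (k k' : M.free.obj Y ⟶ W)
    (h : M.η.app Y ≫ k.f = M.η.app Y ≫ k'.f) : k = k' := by
  apply Monad.Algebra.Hom.ext
  rw [freeHom_f M k, freeHom_f M k', h]

/-- the algebra morphism out of a free algebra with prescribed adjunct -/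
def ofAdj {Y : C} {W : M.Algebra} (h : Y ⟶ W.A) : M.free.obj Y ⟶ W where
  f := M.map h ≫ W.a
  h := by
    show M.map (M.map h ≫ W.a) ≫ W.a = M.μ.app Y ≫ M.map h ≫ W.a
    simp only [Monad.free_obj_a, Functor.map_comp, Category.assoc]
    rw [← W.assoc, ← Functor.comp_map, M.μ.naturality_assoc h]

@[simp] lemma ofAdj_adjunct {Y : C} {W : M.Algebra} (h : Y ⟶ W.A) :
    M.η.app Y ≫ (ofAdj M h).f = h := by
  simp only [ofAdj]
  erw [← M.η.naturality_assoc h]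
  simp [W.unit]

lemma adjunct_ext' {X Y : C} {W : M.Algebra} (w : X ⟶ M.obj Y) (k : M.free.obj Y ⟶ W) :
    M.η.app X ≫ (ext' M w ≫ k).f = w ≫ k.f := by
  show M.η.app X ≫ (M.map w ≫ M.μ.app Y) ≫ k.f = w ≫ k.f
  have h1 : M.η.app X ≫ M.map w = w ≫ M.η.app (M.obj Y) := by
    simpa using (M.η.naturality w).symm
  erw [← Category.assoc, ← Category.assoc]
  erw [h1]
  erw [Category.assoc, Category.assoc]
  erw [Monad.left_unit_assoc]

variable {X Y : C} (u v : X ⟶ M.obj Y)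

/-- the chain of iterated quotients -/
noncomputable def stage : ℕ → Σ' (D E : C), (M.obj D ⟶ E) := fun n =>
  Nat.rec (motive := fun _ => Σ' (D E : C), (M.obj D ⟶ E))
    ⟨Y, coequalizer u v, coequalizer.π u v⟩
    (fun _ s => ⟨s.2.1,
      coequalizer (M.map s.2.2) (M.μ.app s.1 ≫ s.2.2 ≫ M.η.app s.2.1),
      coequalizer.π _ _⟩) n

/-- objects of the chain -/
noncomputable def Cn (n : ℕ) : C := (stage M u v n).2.1

/-- quotient projections -/
noncomputable def pr (n : ℕ) : M.obj ((stage M u v n).1) ⟶ Cn M u v n :=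
  (stage M u v n).2.2

attribute [reducible] stage Cn pr

lemma stage_succ_fst (n : ℕ) : (stage M u v (n+1)).1 = Cn M u v n := rfl

lemma pr_zero : pr M u v 0 = coequalizer.π u v := rfl

lemma rel (n : ℕ) :
    M.map (pr M u v n) ≫ pr M u v (n+1) =
      (M.μ.app _ ≫ pr M u v n ≫ M.η.app (Cn M u v n)) ≫ pr M u v (n+1) :=
  coequalizer.condition _ _

instance epi_pr (n : ℕ) : Epi (pr M u v n) := by
  cases n with
  | zero => exact inferInstanceAs (Epi (coequalizer.π u v))
  | succ n => exact inferInstanceAs (Epi (coequalizer.π _ _))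

/-- connecting maps of the chain -/
noncomputable def jmap (n : ℕ) : Cn M u v n ⟶ Cn M u v (n+1) :=
  M.η.app (Cn M u v n) ≫ pr M u v (n+1)

/-- the chain functor -/
noncomputable def chain : ℕ ⥤ C := Functor.ofSequence (jmap M u v)

@[simp] lemma chain_obj (n : ℕ) : (chain M u v).obj n = Cn M u v n := rfl

lemma chain_map_succ (n : ℕ) :
    (chain M u v).map (homOfLE (Nat.le_succ n)) = jmap M u v n := by
  exact Functor.ofSequence_map_homOfLE_succ _ n

/-- naturality helper for cocones over ℕ-chains -/
lemma seq_nat_trans {F : ℕ ⥤ C} {W : C} (g : ∀ n, F.obj n ⟶ W)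
    (hg : ∀ n, F.map (homOfLE (Nat.le_succ n)) ≫ g (n+1) = g n) :
    ∀ {n m : ℕ} (h : n ⟶ m), F.map h ≫ g m = g n := by
  intro n m h
  have hle : n ≤ m := leOfHom h
  have : h = homOfLE hle := rfl
  subst this
  induction m, hle using Nat.le_induction with
  | base =>
      have : homOfLE (le_refl n) = 𝟙 n := rfl
      rw [this, F.map_id, Category.id_comp]
  | succ m' hnm ih =>
      have : (homOfLE (Nat.le_succ_of_le hnm)) =
          homOfLE hnm ≫ homOfLE (Nat.le_succ m') := rfl
      rw [this, F.map_comp, Category.assoc, hg m', ih]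

/-- build a cocone over an ℕ-chain from successive compatibilities -/
@[simps]
def mkNatCocone {F : ℕ ⥤ C} {W : C} (g : ∀ n, F.obj n ⟶ W)
    (hg : ∀ n, F.map (homOfLE (Nat.le_succ n)) ≫ g (n+1) = g n) : Cocone F where
  pt := W
  ι := { app := g
         naturality := by
           intro n m h
           simp only [Functor.const_obj_obj, Functor.const_obj_map, Category.comp_id]
           exact seq_nat_trans g hg h }

section Act
variable [PreservesColimitsOfShape ℕ (M : C ⥤ C)]

noncomputable def Q0 : C := colimit (chain M u v)

noncomputable def ι' (n : ℕ) : Cn M u v n ⟶ Q0 M u v := colimit.ι (chain M u v) n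

lemma ι'_succ (n : ℕ) : jmap M u v n ≫ ι' M u v (n+1) = ι' M u v n := by
  rw [← chain_map_succ]; exact colimit.w (chain M u v) _

lemma jmap_ι (n : ℕ) :
    M.η.app (Cn M u v n) ≫ pr M u v (n+1) ≫ ι' M u v (n+1) = ι' M u v n := by
  rw [← Category.assoc]; exact ι'_succ M u v n

noncomputable def hMQ :
    IsColimit ((M : C ⥤ C).mapCocone (colimit.cocone (chain M u v))) :=
  isColimitOfPreserves _ (colimit.isColimit _)

noncomputable def hMMQ :
    IsColimit ((M : C ⥤ C).mapCocone ((M : C ⥤ C).mapCocone (colimit.cocone (chain M u v)))) :=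
  isColimitOfPreserves _ (hMQ M u v)

noncomputable def actCocone : Cocone ((chain M u v) ⋙ (M : C ⥤ C)) :=
  mkNatCocone (F := (chain M u v) ⋙ (M : C ⥤ C)) (W := Q0 M u v)
    (fun n => pr M u v (n+1) ≫ ι' M u v (n+1))
    (by
      intro n
      have hmap : ((chain M u v) ⋙ (M : C ⥤ C)).map (homOfLE (Nat.le_succ n)) =
          M.map (jmap M u v n) := by
        rw [Functor.comp_map, chain_map_succ]; rfl
      have h1 : M.map (pr M u v (n+1)) ≫ pr M u v (n+2) =
          (M.μ.app (Cn M u v n) ≫ pr M u v (n+1) ≫ M.η.app (Cn M u v (n+1))) ≫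
            pr M u v (n+2) := rel M u v (n+1)
      rw [hmap]
      calc M.map (jmap M u v n) ≫ pr M u v (n+2) ≫ ι' M u v (n+2)
          = M.map (M.η.app (Cn M u v n)) ≫
              (M.map (pr M u v (n+1)) ≫ pr M u v (n+2)) ≫ ι' M u v (n+2) := by
            rw [jmap, Functor.map_comp]; simp only [Category.assoc]
        _ = M.map (M.η.app (Cn M u v n)) ≫
              ((M.μ.app (Cn M u v n) ≫ pr M u v (n+1) ≫ M.η.app (Cn M u v (n+1))) ≫
                pr M u v (n+2)) ≫ ι' M u v (n+2) := by rw [h1]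
        _ = (M.map (M.η.app (Cn M u v n)) ≫ M.μ.app (Cn M u v n)) ≫
              pr M u v (n+1) ≫ (M.η.app (Cn M u v (n+1)) ≫ pr M u v (n+2)) ≫
                ι' M u v (n+2) := by simp only [Category.assoc]
        _ = pr M u v (n+1) ≫ ι' M u v (n+1) := by
            rw [Monad.right_unit]
            simp only [Category.id_comp, Category.assoc]
            rw [jmap_ι])

noncomputable def act : M.obj (Q0 M u v) ⟶ Q0 M u v :=
  (hMQ M u v).desc (actCocone M u v)

lemma act_fac (n : ℕ) :
    M.map (ι' M u v n) ≫ act M u v = pr M u v (n+1) ≫ ι' M u v (n+1) :=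
  (hMQ M u v).fac (actCocone M u v) n

noncomputable def Qalg : M.Algebra where
  A := Q0 M u v
  a := act M u v
  unit := by
    apply colimit.hom_ext
    intro n
    have h1 : colimit.ι (chain M u v) n ≫ M.η.app (Q0 M u v) =
        M.η.app (Cn M u v n) ≫ M.map (ι' M u v n) := by
      exact M.η.naturality (ι' M u v n)
    rw [show colimit.ι (chain M u v) n ≫ 𝟙 (Q0 M u v) = ι' M u v n from Category.comp_id _]
    erw [← Category.assoc, h1, Category.assoc, act_fac]
    erw [jmap_ι]
  assoc := by
    apply (hMMQ M u v).hom_ext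
    intro n
    have legs : ((M : C ⥤ C).mapCocone ((M : C ⥤ C).mapCocone
        (colimit.cocone (chain M u v)))).ι.app n = M.map (M.map (ι' M u v n)) := rfl
    rw [legs]
    have nat : M.map (M.map (ι' M u v n)) ≫ M.μ.app (Q0 M u v) =
        M.μ.app (Cn M u v n) ≫ M.map (ι' M u v n) := by
      simpa using M.μ.naturality (ι' M u v n)
    have h1 : M.map (pr M u v (n+1)) ≫ pr M u v (n+2) =
        (M.μ.app (Cn M u v n) ≫ pr M u v (n+1) ≫ M.η.app (Cn M u v (n+1))) ≫
          pr M u v (n+2) := rel M u v (n+1)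
    calc M.map (M.map (ι' M u v n)) ≫ M.μ.app (Q0 M u v) ≫ act M u v
        = M.μ.app (Cn M u v n) ≫ M.map (ι' M u v n) ≫ act M u v := by
          rw [← Category.assoc, nat, Category.assoc]
      _ = M.μ.app (Cn M u v n) ≫ pr M u v (n+1) ≫ ι' M u v (n+1) := by rw [act_fac]
      _ = M.μ.app (Cn M u v n) ≫ pr M u v (n+1) ≫
            (M.η.app (Cn M u v (n+1)) ≫ pr M u v (n+2)) ≫ ι' M u v (n+2) := by
          simp only [Category.assoc]
          rw [jmap_ι]
      _ = (M.map (pr M u v (n+1)) ≫ pr M u v (n+2)) ≫ ι' M u v (n+2) := by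
          rw [h1]; simp only [Category.assoc]
      _ = M.map (M.map (ι' M u v n)) ≫ M.map (act M u v) ≫ act M u v := by
          have e1 : M.map (M.map (ι' M u v n)) ≫ M.map (act M u v) =
              M.map (pr M u v (n+1)) ≫ M.map (ι' M u v (n+1)) := by
            rw [← Functor.map_comp, act_fac M u v n, Functor.map_comp]
          rw [← Category.assoc, e1]
          simp only [Category.assoc]
          rw [act_fac M u v (n+1)]

noncomputable def ρ' : M.free.obj Y ⟶ Qalg M u v where
  f := pr M u v 0 ≫ ι' M u v 0
  h := by
    show M.map (pr M u v 0 ≫ ι' M u v 0) ≫ act M u v =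
      M.μ.app Y ≫ pr M u v 0 ≫ ι' M u v 0
    have h1 : M.map (pr M u v 0) ≫ pr M u v 1 =
        (M.μ.app Y ≫ pr M u v 0 ≫ M.η.app (Cn M u v 0)) ≫ pr M u v 1 := rel M u v 0
    rw [Functor.map_comp, Category.assoc, act_fac, ← Category.assoc, h1]
    simp only [Category.assoc]
    have hj := jmap_ι M u v 0
    erw [hj]

lemma cofork_cond : ext' M u ≫ ρ' M u v = ext' M v ≫ ρ' M u v := by
  apply freeHom_ext
  show M.η.app X ≫ (ext' M u).f ≫ (ρ' M u v).f = M.η.app X ≫ (ext' M v).f ≫ (ρ' M u v).f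
  have key : ∀ w : X ⟶ M.obj Y, M.η.app X ≫ (ext' M w).f ≫ (ρ' M u v).f =
      w ≫ pr M u v 0 ≫ ι' M u v 0 := by
    intro w
    show M.η.app X ≫ (M.map w ≫ M.μ.app Y) ≫ (pr M u v 0 ≫ ι' M u v 0) =
      w ≫ pr M u v 0 ≫ ι' M u v 0
    have h1 : M.η.app X ≫ M.map w = w ≫ M.η.app (M.obj Y) := by
      simpa using (M.η.naturality w).symm
    simp only [← Category.assoc]
    rw [h1]
    simp only [Category.assoc]
    rw [Monad.left_unit_assoc]
  rw [key u, key v, ← Category.assoc, ← Category.assoc,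
    show u ≫ pr M u v 0 = u ≫ coequalizer.π u v from rfl, coequalizer.condition u v]
  rfl

/-- The universal property of the chain quotient. -/
theorem univQ (W : M.Algebra) (k : M.free.obj Y ⟶ W)
    (hk : ext' M u ≫ k = ext' M v ≫ k) :
    ∃! m : Qalg M u v ⟶ W, ρ' M u v ≫ m = k := by
  -- the compatible family
  have hcoeq : u ≫ k.f = v ≫ k.f := by
    have := congrArg (fun t => M.η.app X ≫ Monad.Algebra.Hom.f t) hk
    simp only [Monad.Algebra.comp_f, ext'_f] at this
    have h1 : ∀ w : X ⟶ M.obj Y, M.η.app X ≫ (M.map w ≫ M.μ.app Y) ≫ k.f = w ≫ k.f := by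
      intro w
      have h2 : M.η.app X ≫ M.map w = w ≫ M.η.app (M.obj Y) := by
        simpa using (M.η.naturality w).symm
      erw [← Category.assoc, ← Category.assoc]
      erw [h2]
      erw [Category.assoc, Category.assoc]
      erw [Monad.left_unit_assoc]
    rw [← h1 u, ← h1 v]
    exact this
  let G : ∀ n : ℕ, {g : Cn M u v n ⟶ W.A //
      M.map (pr M u v n ≫ g) ≫ W.a = M.μ.app ((stage M u v n).1) ≫ pr M u v n ≫ g} :=
    fun n => Nat.rec (motive := fun n => {g : Cn M u v n ⟶ W.A //
        M.map (pr M u v n ≫ g) ≫ W.a = M.μ.app ((stage M u v n).1) ≫ pr M u v n ≫ g})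
      ⟨coequalizer.desc k.f hcoeq, by
        rw [show pr M u v 0 ≫ coequalizer.desc k.f hcoeq = k.f from coequalizer.π_desc _ _]
        exact k.h⟩
      (fun n g => ⟨coequalizer.desc (M.map g.1 ≫ W.a) (by
          -- compatibility for desc at the successor stage
          have hg := g.2
          calc M.map (pr M u v n) ≫ M.map g.1 ≫ W.a
              = M.map (pr M u v n ≫ g.1) ≫ W.a := by rw [Functor.map_comp, Category.assoc]
            _ = M.μ.app ((stage M u v n).1) ≫ pr M u v n ≫ g.1 := hg
            _ = (M.μ.app ((stage M u v n).1) ≫ pr M u v n ≫ M.η.app (Cn M u v n)) ≫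
                  M.map g.1 ≫ W.a := by
                have h3 : M.η.app (Cn M u v n) ≫ M.map g.1 = g.1 ≫ M.η.app W.A := by
                  simpa using (M.η.naturality g.1).symm
                have h4 : M.η.app (Cn M u v n) ≫ M.map g.1 ≫ W.a = g.1 := by
                  rw [← Category.assoc, h3, Category.assoc, W.unit, Category.comp_id]
                simp only [Category.assoc]
                rw [h4]), by
        rw [show pr M u v (n+1) ≫ coequalizer.desc (M.map g.1 ≫ W.a) _ =
          M.map g.1 ≫ W.a from coequalizer.π_desc _ _]
        calc M.map (M.map g.1 ≫ W.a) ≫ W.a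
            = M.map (M.map g.1) ≫ M.map W.a ≫ W.a := by rw [Functor.map_comp, Category.assoc]
          _ = M.map (M.map g.1) ≫ M.μ.app W.A ≫ W.a := by rw [← W.assoc]
          _ = M.μ.app (Cn M u v n) ≫ M.map g.1 ≫ W.a := by
              rw [← Category.assoc, ← Category.assoc]
              congr 1
              simpa using (M.μ.naturality g.1)⟩) n
  have hG0 : pr M u v 0 ≫ (G 0).1 = k.f := coequalizer.π_desc _ _
  have hGsucc : ∀ n, pr M u v (n+1) ≫ (G (n+1)).1 = M.map (G n).1 ≫ W.a :=
    fun n => coequalizer.π_desc _ _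
  have hGj : ∀ n, jmap M u v n ≫ (G (n+1)).1 = (G n).1 := by
    intro n
    rw [jmap, Category.assoc, hGsucc n]
    have h3 : M.η.app (Cn M u v n) ≫ M.map (G n).1 = (G n).1 ≫ M.η.app W.A := by
      simpa using (M.η.naturality (G n).1).symm
    rw [← Category.assoc, h3, Category.assoc, W.unit, Category.comp_id]
  let m0 : Q0 M u v ⟶ W.A :=
    colimit.desc (chain M u v) (mkNatCocone (fun n => (G n).1) (by
      intro n; rw [chain_map_succ]; exact hGj n))
  have hm0 : ∀ n, ι' M u v n ≫ m0 = (G n).1 := fun n => colimit.ι_desc _ _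
  have hmalg : M.map m0 ≫ W.a = act M u v ≫ m0 := by
    apply (hMQ M u v).hom_ext
    intro n
    have legs : ((M : C ⥤ C).mapCocone (colimit.cocone (chain M u v))).ι.app n =
        M.map (ι' M u v n) := rfl
    rw [legs]
    erw [← Category.assoc, ← Functor.map_comp, hm0 n, ← Category.assoc, act_fac,
      Category.assoc, hm0 (n+1), hGsucc n]
    rfl
  refine ⟨⟨m0, hmalg⟩, ?_, ?_⟩
  · apply Monad.Algebra.Hom.ext
    show (pr M u v 0 ≫ ι' M u v 0) ≫ m0 = k.f
    rw [Category.assoc, hm0 0, hG0]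
  · intro m' hm'
    apply Monad.Algebra.Hom.ext
    show m'.f = m0
    apply colimit.hom_ext
    intro n
    show ι' M u v n ≫ m'.f = ι' M u v n ≫ m0
    rw [hm0 n]
    induction n with
    | zero =>
        have : pr M u v 0 ≫ colimit.ι (chain M u v) 0 ≫ m'.f = pr M u v 0 ≫ (G 0).1 := by
          erw [hG0, ← Category.assoc]
          exact congrArg Monad.Algebra.Hom.f hm'
        exact (cancel_epi (pr M u v 0)).mp this
    | succ n ih =>
        have : pr M u v (n+1) ≫ colimit.ι (chain M u v) (n+1) ≫ m'.f =
            pr M u v (n+1) ≫ (G (n+1)).1 := by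
          rw [hGsucc n]
          have h4 : pr M u v (n+1) ≫ ι' M u v (n+1) ≫ m'.f =
              M.map (ι' M u v n) ≫ act M u v ≫ m'.f := by
            erw [← Category.assoc, ← act_fac, Category.assoc]
          erw [show colimit.ι (chain M u v) (n+1) = ι' M u v (n+1) from rfl, h4]
          rw [show act M u v ≫ m'.f = M.map m'.f ≫ W.a from m'.h.symm]
          erw [← Category.assoc, ← Functor.map_comp, ih]
        exact (cancel_epi (pr M u v (n+1))).mp this

end Act

end ChainCoeq

section PbBasic

variable {A : Type u₁} {B : Type u₂} {K : Type u₃}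
  [Category.{v₁} A] [Category.{v₂} B] [Category.{v₃} K]
  {U : A ⥤ K} {V : B ⥤ K}

@[simp] lemma pb_id_fl (X : CatPullback U V) :
    (𝟙 X : X ⟶ X).fl = 𝟙 X.left := rfl

@[simp] lemma pb_id_fr (X : CatPullback U V) :
    (𝟙 X : X ⟶ X).fr = 𝟙 X.right := rfl

@[simp] lemma pb_comp_fl {X Y Z : CatPullback U V} (f : X ⟶ Y) (g : Y ⟶ Z) :
    (f ≫ g).fl = f.fl ≫ g.fl := rfl

@[simp] lemma pb_comp_fr {X Y Z : CatPullback U V} (f : X ⟶ Y) (g : Y ⟶ Z) :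
    (f ≫ g).fr = f.fr ≫ g.fr := rfl

@[simp] lemma pb_π₂_obj (X : CatPullback U V) :
    (CatPullback.π₂ U V).obj X = X.right := rfl

@[simp] lemma pb_π₂_map {X Y : CatPullback U V} (f : X ⟶ Y) :
    (CatPullback.π₂ U V).map f = f.fr := rfl

lemma pb_hom_ext {X Y : CatPullback U V} {f g : X ⟶ Y}
    (h1 : f.fl = g.fl) (h2 : f.fr = g.fr) : f = g :=
  CatPullbackHom.ext h1 h2

lemma pb_fl_eq {X Y : CatPullback U V} (f : X ⟶ Y) :
    U.map f.fl = eqToHom X.w ≫ V.map f.fr ≫ eqToHom Y.w.symm := by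
  rw [← Category.assoc, ← f.w, Category.assoc, eqToHom_trans, eqToHom_refl, Category.comp_id]

end PbBasic

section Main

variable {K : Type u} [Category.{v} K]
variable (T S : CategoryTheory.Monad K) {R : CategoryTheory.Monad K}
variable (e : R.Algebra ≌ CatPullback T.forget S.forget)
variable (he : e.functor ⋙ CatPullback.diag T.forget S.forget ≅ R.forget)

/-- the S-algebra associated to an R-algebra through the equivalence -/
noncomputable def AW (W : R.Algebra) : S.Algebra := (e.functor.obj W).right

/-- the canonical identification of the carrier of `AW W` with the carrier of `W` -/
noncomputable def θiso (W : R.Algebra) : (AW T S e W).A ≅ W.A :=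
  eqToIso ((e.functor.obj W).w).symm ≪≫ he.app W

lemma θ_nat {W W' : R.Algebra} (k : W ⟶ W') :
    ((e.functor.map k).fr).f ≫ (θiso T S e he W').hom = (θiso T S e he W).hom ≫ k.f := by
  have hnat' : T.forget.map ((e.functor.map k).fl) ≫ he.hom.app W' = he.hom.app W ≫ k.f :=
    he.hom.naturality k
  have hw'' : T.forget.map ((e.functor.map k).fl) =
      eqToHom (e.functor.obj W).w ≫ ((e.functor.map k).fr).f ≫
        eqToHom ((e.functor.obj W').w).symm := pb_fl_eq (e.functor.map k)
  show ((e.functor.map k).fr).f ≫ (eqToHom ((e.functor.obj W').w).symm ≫ he.hom.app W') =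
    (eqToHom ((e.functor.obj W).w).symm ≫ he.hom.app W) ≫ k.f
  rw [hw''] at hnat'
  erw [Category.assoc, ← hnat', Category.assoc, eqToHom_trans_assoc, eqToHom_refl,
    Category.id_comp, Category.assoc]
  rfl

lemma θ_nat_inv {W W' : R.Algebra} (k : W ⟶ W') :
    (θiso T S e he W).inv ≫ ((e.functor.map k).fr).f = k.f ≫ (θiso T S e he W').inv := by
  erw [Iso.inv_comp_eq, ← Category.assoc, ← θ_nat T S e he k, Category.assoc,
    Iso.hom_inv_id, Category.comp_id]

/-- the S-action on the carrier of an R-algebra, obtained through the equivalence -/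
noncomputable def σa (W : R.Algebra) : S.obj W.A ⟶ W.A :=
  S.map (θiso T S e he W).inv ≫ (AW T S e W).a ≫ (θiso T S e he W).hom

lemma σ_nat {W W' : R.Algebra} (k : W ⟶ W') :
    σa T S e he W ≫ k.f = S.map k.f ≫ σa T S e he W' := by
  have hfr : S.map (((e.functor.map k).fr).f) ≫ (AW T S e W').a =
      (AW T S e W).a ≫ ((e.functor.map k).fr).f := ((e.functor.map k).fr).h
  have hθ := θ_nat T S e he k
  calc σa T S e he W ≫ k.f
      = S.map (θiso T S e he W).inv ≫ (AW T S e W).a ≫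
          (((e.functor.map k).fr).f ≫ (θiso T S e he W').hom) := by
        simp only [σa, Category.assoc]; erw [hθ]
    _ = S.map (θiso T S e he W).inv ≫ S.map (((e.functor.map k).fr).f) ≫
          (AW T S e W').a ≫ (θiso T S e he W').hom := by
        erw [← Category.assoc ((AW T S e W).a), ← hfr]
        erw [Category.assoc]
        rfl
    _ = S.map k.f ≫ σa T S e he W' := by
        simp only [σa, ← Functor.map_comp_assoc]
        erw [← Functor.map_comp_assoc, θ_nat_inv T S e he k]
        rfl

lemma algHomOfGood {W : R.Algebra} (B : S.Algebra) (h : B.A ⟶ W.A)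
    (hgood : B.a ≫ h = S.map h ≫ σa T S e he W) :
    S.map (h ≫ (θiso T S e he W).inv) ≫ (AW T S e W).a =
      B.a ≫ (h ≫ (θiso T S e he W).inv) := by
  have hσ : σa T S e he W ≫ (θiso T S e he W).inv =
      S.map (θiso T S e he W).inv ≫ (AW T S e W).a := by
    simp only [σa, Category.assoc, Iso.hom_inv_id, Category.comp_id]
  rw [Functor.map_comp, Category.assoc, ← hσ, ← Category.assoc, ← hgood, Category.assoc]

lemma goodOfAlgHom {W : R.Algebra} {B : S.Algebra} (β' : B ⟶ AW T S e W) :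
    B.a ≫ (β'.f ≫ (θiso T S e he W).hom) =
      S.map (β'.f ≫ (θiso T S e he W).hom) ≫ σa T S e he W := by
  have hβ : S.map β'.f ≫ (AW T S e W).a = B.a ≫ β'.f := β'.h
  simp only [σa]
  rw [← Functor.map_comp_assoc]
  simp only [Category.assoc, Iso.hom_inv_id, Category.comp_id]
  rw [← Category.assoc, ← Category.assoc, ← hβ]

include e he in
theorem univArrow [HasColimitsOfShape ℕ K] [HasCoequalizers K]
    [PreservesColimitsOfShape ℕ (R : K ⥤ K)] (B : S.Algebra) :
    ∃ (L : CatPullback T.forget S.forget)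
      (uB : B ⟶ (CatPullback.π₂ T.forget S.forget).obj L),
      ∀ (Xp : CatPullback T.forget S.forget)
        (β : B ⟶ (CatPullback.π₂ T.forget S.forget).obj Xp),
        ∃! m : L ⟶ Xp, uB ≫ (CatPullback.π₂ T.forget S.forget).map m = β := by
  let u : S.obj B.A ⟶ R.obj B.A := B.a ≫ R.η.app B.A
  let v : S.obj B.A ⟶ R.obj B.A := S.map (R.η.app B.A) ≫ σa T S e he (R.free.obj B.A)
  -- the key equivalence between coforks and "good" maps
  have claim1 : ∀ (W : R.Algebra) (k : R.free.obj B.A ⟶ W),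
      (ext' R u ≫ k = ext' R v ≫ k) ↔
      (B.a ≫ (R.η.app B.A ≫ k.f) = S.map (R.η.app B.A ≫ k.f) ≫ σa T S e he W) := by
    intro W k
    have hadj_u : R.η.app (S.obj B.A) ≫ (ext' R u ≫ k).f =
        B.a ≫ (R.η.app B.A ≫ k.f) := by
      rw [adjunct_ext']
      show (B.a ≫ R.η.app B.A) ≫ k.f = _
      erw [Category.assoc]
    have hadj_v : R.η.app (S.obj B.A) ≫ (ext' R v ≫ k).f =
        S.map (R.η.app B.A ≫ k.f) ≫ σa T S e he W := by
      rw [adjunct_ext']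
      show (S.map (R.η.app B.A) ≫ σa T S e he (R.free.obj B.A)) ≫ k.f = _
      erw [Category.assoc, σ_nat T S e he k, ← Functor.map_comp_assoc]
    constructor
    · intro hh
      rw [← hadj_u, ← hadj_v, hh]
    · intro hh
      apply freeHom_ext
      rw [hadj_u, hadj_v, hh]
  have good_hB := (claim1 _ (ρ' R u v)).mp (cofork_cond R u v)
  refine ⟨e.functor.obj (Qalg R u v),
    ⟨(R.η.app B.A ≫ (ρ' R u v).f) ≫ (θiso T S e he (Qalg R u v)).inv,
      algHomOfGood T S e he B _ good_hB⟩, ?_⟩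
  intro Xp β
  let β' : B ⟶ AW T S e (e.inverse.obj Xp) := β ≫ ((e.counitIso.app Xp).inv.fr)
  have good_h := goodOfAlgHom T S e he β'
  have hcof := (claim1 (e.inverse.obj Xp)
      (ofAdj R (β'.f ≫ (θiso T S e he (e.inverse.obj Xp)).hom))).mpr (by
    rw [ofAdj_adjunct]
    exact good_h)
  obtain ⟨m, hm, hmuniq⟩ := univQ R u v (e.inverse.obj Xp)
    (ofAdj R (β'.f ≫ (θiso T S e he (e.inverse.obj Xp)).hom)) hcof
  have hβ'f : β'.f = β.f ≫ ((e.counitIso.app Xp).inv.fr).f := rfl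
  have hmm : ((R.η.app B.A ≫ (ρ' R u v).f)) ≫ m.f =
      β'.f ≫ (θiso T S e he (e.inverse.obj Xp)).hom := by
    erw [Category.assoc, ← Monad.Algebra.comp_f, hm, ofAdj_adjunct]
  have hfrfr : ((e.counitIso.app Xp).inv.fr).f ≫ ((e.counitIso.app Xp).hom.fr).f = 𝟙 _ := by
    rw [← Monad.Algebra.comp_f, ← pb_comp_fr, Iso.inv_hom_id]
    rfl
  have hmm' : R.η.app B.A ≫ (ρ' R u v).f ≫ m.f =
      β'.f ≫ (θiso T S e he (e.inverse.obj Xp)).hom := by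
    erw [← Category.assoc]; exact hmm
  refine ⟨e.functor.map m ≫ (e.counitIso.app Xp).hom, ?_, ?_⟩
  · apply Monad.Algebra.Hom.ext
    show ((R.η.app B.A ≫ (ρ' R u v).f) ≫ (θiso T S e he (Qalg R u v)).inv) ≫
        ((e.functor.map m ≫ (e.counitIso.app Xp).hom).fr).f = β.f
    rw [pb_comp_fr, Monad.Algebra.comp_f]
    erw [Category.assoc, Category.assoc]
    erw [← Category.assoc (f := (θiso T S e he (Qalg R u v)).inv), θ_nat_inv T S e he m,
      Category.assoc (f := m.f)]
    erw [← Category.assoc (f := (ρ' R u v).f), ← Category.assoc (f := R.η.app B.A), hmm',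
      Category.assoc (f := β'.f)]
    erw [Iso.hom_inv_id_assoc]
    rw [hβ'f]
    erw [Category.assoc (f := β.f)]
    erw [hfrfr]
    exact Category.comp_id β.f
  · intro m' hm'
    have hmapn : e.functor.map (e.functor.preimage (m' ≫ (e.counitIso.app Xp).inv)) =
        m' ≫ (e.counitIso.app Xp).inv := Functor.map_preimage _ _
    have hρn : ρ' R u v ≫ e.functor.preimage (m' ≫ (e.counitIso.app Xp).inv) =
        ofAdj R (β'.f ≫ (θiso T S e he (e.inverse.obj Xp)).hom) := by
      apply freeHom_ext
      rw [ofAdj_adjunct]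
      show R.η.app B.A ≫ ((ρ' R u v).f ≫
          (e.functor.preimage (m' ≫ (e.counitIso.app Xp).inv)).f) =
        β'.f ≫ (θiso T S e he (e.inverse.obj Xp)).hom
      have h7 : (e.functor.preimage (m' ≫ (e.counitIso.app Xp).inv)).f =
          (θiso T S e he (Qalg R u v)).inv ≫
            ((e.functor.map (e.functor.preimage (m' ≫ (e.counitIso.app Xp).inv))).fr).f ≫
            (θiso T S e he (e.inverse.obj Xp)).hom := by
        erw [θ_nat T S e he, Iso.inv_hom_id_assoc]
      rw [h7, hmapn, pb_comp_fr, Monad.Algebra.comp_f]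
      have huse : ((R.η.app B.A ≫ (ρ' R u v).f) ≫ (θiso T S e he (Qalg R u v)).inv) ≫
          m'.fr.f = β.f := congrArg Monad.Algebra.Hom.f hm'
      erw [Category.assoc (f := R.η.app B.A ≫ (ρ' R u v).f), Category.assoc (f := R.η.app B.A)]
        at huse
      erw [Category.assoc (f := m'.fr.f)]
      erw [← Category.assoc (f := (θiso T S e he (Qalg R u v)).inv),
        ← Category.assoc (f := (ρ' R u v).f), ← Category.assoc (f := R.η.app B.A), huse]
      rw [hβ'f]
      erw [Category.assoc (f := β.f)]
      rfl
    have hnm := hmuniq _ hρn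
    have h8 : e.functor.map m = m' ≫ (e.counitIso.app Xp).inv := by rw [← hnm]; exact hmapn
    rw [h8, Category.assoc, Iso.inv_hom_id, Category.comp_id]

end Main



section Beck

variable {K : Type u} [Category.{v} K] (T S : CategoryTheory.Monad K)

lemma pb_reflects_iso : (CatPullback.π₂ T.forget S.forget).ReflectsIsomorphisms := by
  constructor
  intro X Y f hf
  have hfr : IsIso f.fr := hf
  have hfl0 : IsIso (T.forget.map f.fl) := by
    rw [pb_fl_eq f]
    infer_instance
  have hfl : IsIso f.fl := isIso_of_reflects_iso f.fl T.forget
  refine ⟨⟨⟨inv f.fl, inv f.fr, ?_⟩, ?_, ?_⟩⟩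
  · have hh : f.fr.f ≫ (inv f.fr).f = 𝟙 _ := by
      have h2 := congrArg Monad.Algebra.Hom.f (IsIso.hom_inv_id f.fr)
      simp only [Monad.Algebra.comp_f, Monad.Algebra.id_f] at h2
      exact h2
    rw [Functor.map_inv, IsIso.inv_comp_eq, pb_fl_eq f]
    simp only [Monad.forget_map, Category.assoc, eqToHom_trans_assoc, eqToHom_refl,
      Category.id_comp]
    erw [Category.assoc, eqToHom_trans_assoc, eqToHom_refl, Category.id_comp, hh,
      Category.comp_id]
  · apply pb_hom_ext <;> simp
  · apply pb_hom_ext <;> simp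

variable {X Y : CatPullback T.forget S.forget} (f g : X ⟶ Y)
variable {Z : S.Algebra} {πS : Y.right ⟶ Z}
variable (sp : IsSplitCoequalizer f.fr g.fr πS)

omit sp in
lemma s_cond_fr (s : Cofork f g) : f.fr ≫ s.π.fr = g.fr ≫ s.π.fr := by
  have := congrArg CatPullbackHom.fr s.condition
  simpa using this

omit sp in
lemma s_cond_fl (s : Cofork f g) : f.fl.f ≫ s.π.fl.f = g.fl.f ≫ s.π.fl.f := by
  have := congrArg (fun t => Monad.Algebra.Hom.f (CatPullbackHom.fl t)) s.condition
  simpa using this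

include sp

/-- the split coequalizer on the T-side underlying level -/
noncomputable def spTd : IsSplitCoequalizer f.fl.f g.fl.f (eqToHom Y.w ≫ πS.f) := by
  have hf : f.fl.f = eqToHom X.w ≫ f.fr.f ≫ eqToHom Y.w.symm := by
    exact pb_fl_eq f
  have hg : g.fl.f = eqToHom X.w ≫ g.fr.f ≫ eqToHom Y.w.symm := by
    exact pb_fl_eq g
  have hcondS : f.fr.f ≫ πS.f = g.fr.f ≫ πS.f := by
    simpa using congrArg Monad.Algebra.Hom.f sp.condition
  have hs : sp.rightSection.f ≫ πS.f = 𝟙 Z.A := by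
    have h2 := congrArg Monad.Algebra.Hom.f sp.rightSection_π
    simp only [Monad.Algebra.comp_f, Monad.Algebra.id_f] at h2
    exact h2
  have htb : sp.leftSection.f ≫ g.fr.f = 𝟙 Y.right.A := by
    have h2 := congrArg Monad.Algebra.Hom.f sp.leftSection_bottom
    simp only [Monad.Algebra.comp_f, Monad.Algebra.id_f] at h2
    exact h2
  have htt : sp.leftSection.f ≫ f.fr.f = πS.f ≫ sp.rightSection.f := by
    have h2 := congrArg Monad.Algebra.Hom.f sp.leftSection_top
    simp only [Monad.Algebra.comp_f, Monad.Algebra.id_f] at h2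
    exact h2
  refine ⟨sp.rightSection.f ≫ eqToHom Y.w.symm,
          eqToHom Y.w ≫ sp.leftSection.f ≫ eqToHom X.w.symm, ?_, ?_, ?_, ?_⟩
  · rw [hf, hg]
    erw [Category.assoc, Category.assoc, Category.assoc, Category.assoc, eqToHom_trans_assoc,
      eqToHom_refl, Category.id_comp]
    erw [hcondS]
    rfl
  · simp only [Category.assoc, eqToHom_trans_assoc, eqToHom_refl, Category.id_comp]
    erw [eqToHom_trans_assoc, eqToHom_refl, Category.id_comp, hs]
  · rw [hg]
    erw [Category.assoc, Category.assoc, eqToHom_trans_assoc, eqToHom_refl, Category.id_comp]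
    erw [reassoc_of% htb]
    erw [eqToHom_trans, eqToHom_refl]
  · rw [hf]
    erw [Category.assoc, Category.assoc, Category.assoc, eqToHom_trans_assoc, eqToHom_refl,
      Category.id_comp]
    erw [reassoc_of% htt]
    rfl

lemma spTd_cond_comm :
    (T : K ⥤ K).map f.fl.f ≫ (Y.left.a ≫ (eqToHom Y.w ≫ πS.f)) =
    (T : K ⥤ K).map g.fl.f ≫ (Y.left.a ≫ (eqToHom Y.w ≫ πS.f)) := by
  rw [reassoc_of% f.fl.h, reassoc_of% g.fl.h]
  have hc := (spTd T S f g sp).condition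
  congr 1

/-- the action of T on the coequalizer -/
noncomputable def aTd : T.obj Z.A ⟶ Z.A :=
  Cofork.IsColimit.desc ((spTd T S f g sp).map (T : K ⥤ K)).isCoequalizer
    (Y.left.a ≫ (eqToHom Y.w ≫ πS.f)) (spTd_cond_comm T S f g sp)

lemma aTd_fac :
    T.map (eqToHom Y.w ≫ πS.f) ≫ aTd T S f g sp = Y.left.a ≫ (eqToHom Y.w ≫ πS.f) := by
  have h := Cofork.IsColimit.π_desc' ((spTd T S f g sp).map (T : K ⥤ K)).isCoequalizer
    (Y.left.a ≫ (eqToHom Y.w ≫ πS.f)) (spTd_cond_comm T S f g sp)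
  exact h

lemma epi_πT : Epi (eqToHom Y.w ≫ πS.f) := by
  have : IsSplitEpi (eqToHom Y.w ≫ πS.f) :=
    IsSplitEpi.mk' ⟨(spTd T S f g sp).rightSection, (spTd T S f g sp).rightSection_π⟩
  infer_instance

lemma epi_TTπT : Epi ((T : K ⥤ K).map ((T : K ⥤ K).map (eqToHom Y.w ≫ πS.f))) := by
  have : IsSplitEpi ((T : K ⥤ K).map ((T : K ⥤ K).map (eqToHom Y.w ≫ πS.f))) :=
    IsSplitEpi.mk' ⟨T.map (T.map (spTd T S f g sp).rightSection), by
      erw [← Functor.map_comp, ← Functor.map_comp, (spTd T S f g sp).rightSection_π]; simp⟩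
  infer_instance

/-- the T-algebra structure on the coequalizer object -/
noncomputable def Zalg : T.Algebra where
  A := Z.A
  a := aTd T S f g sp
  unit := by
    have := epi_πT T S f g sp
    rw [← cancel_epi (eqToHom Y.w ≫ πS.f), Category.comp_id]
    have hn : (eqToHom Y.w ≫ πS.f) ≫ T.η.app Z.A =
        T.η.app (Y.left.A) ≫ T.map (eqToHom Y.w ≫ πS.f) := by
      exact T.η.naturality (eqToHom Y.w ≫ πS.f)
    erw [← Category.assoc, hn, Category.assoc, aTd_fac]
    erw [reassoc_of% Y.left.unit]
    rfl
  assoc := by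
    have := epi_TTπT T S f g sp
    rw [← cancel_epi ((T : K ⥤ K).map ((T : K ⥤ K).map (eqToHom Y.w ≫ πS.f)))]
    have hnμ : T.map (T.map (eqToHom Y.w ≫ πS.f)) ≫ T.μ.app Z.A =
        T.μ.app (Y.left.A) ≫ T.map (eqToHom Y.w ≫ πS.f) := by
      exact T.μ.naturality (eqToHom Y.w ≫ πS.f)
    erw [← Category.assoc, hnμ, Category.assoc, aTd_fac]
    erw [← Functor.map_comp_assoc, aTd_fac, Functor.map_comp, Category.assoc, aTd_fac]
    erw [← reassoc_of% Y.left.assoc]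
    rfl

/-- the coequalizing object in the pullback category -/
noncomputable def Qpb : CatPullback T.forget S.forget :=
  ⟨Zalg T S f g sp, Z, rfl⟩

/-- the coequalizing cofork in the pullback category -/
noncomputable def coforkPb : Cofork f g :=
  Cofork.ofπ (P := Qpb T S f g sp)
    ⟨⟨eqToHom Y.w ≫ πS.f, aTd_fac T S f g sp⟩, πS, by
      erw [eqToHom_refl, Category.comp_id]; rfl⟩
    (by
      apply pb_hom_ext
      · apply Monad.Algebra.Hom.ext
        show f.fl.f ≫ (eqToHom Y.w ≫ πS.f) = g.fl.f ≫ (eqToHom Y.w ≫ πS.f)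
        exact (spTd T S f g sp).condition
      · show f.fr ≫ πS = g.fr ≫ πS
        exact sp.condition)

section Desc

variable (s : Cofork f g)

/-- S-side descent -/
noncomputable def descS : Z ⟶ s.pt.right :=
  Cofork.IsColimit.desc sp.isCoequalizer s.π.fr (s_cond_fr T S f g s)

lemma descS_fac : πS ≫ descS T S f g sp s = s.π.fr := by
  have h := Cofork.IsColimit.π_desc' sp.isCoequalizer s.π.fr (s_cond_fr T S f g s)
  simpa [descS, IsSplitCoequalizer.asCofork] using h

/-- T-side descent, underlying map -/
noncomputable def descT0 : Z.A ⟶ s.pt.left.A :=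
  Cofork.IsColimit.desc (spTd T S f g sp).isCoequalizer s.π.fl.f (s_cond_fl T S f g s)

lemma descT0_fac : (eqToHom Y.w ≫ πS.f) ≫ descT0 T S f g sp s = s.π.fl.f := by
  have h := Cofork.IsColimit.π_desc' (spTd T S f g sp).isCoequalizer s.π.fl.f
    (s_cond_fl T S f g s)
  exact h

lemma descT0_alg :
    (T : K ⥤ K).map (descT0 T S f g sp s) ≫ s.pt.left.a =
      aTd T S f g sp ≫ descT0 T S f g sp s := by
  have h1 : Epi ((T : K ⥤ K).map (eqToHom Y.w ≫ πS.f)) := by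
    have : IsSplitEpi ((T : K ⥤ K).map (eqToHom Y.w ≫ πS.f)) :=
      IsSplitEpi.mk' ⟨T.map (spTd T S f g sp).rightSection, by
        erw [← Functor.map_comp, (spTd T S f g sp).rightSection_π]; simp⟩
    infer_instance
  rw [← cancel_epi ((T : K ⥤ K).map (eqToHom Y.w ≫ πS.f))]
  rw [← Functor.map_comp_assoc, descT0_fac]
  rw [reassoc_of% (aTd_fac T S f g sp)]
  have hfac := descT0_fac T S f g sp s
  erw [Category.assoc]
  erw [hfac]
  exact s.π.fl.h

/-- the descent morphism in the pullback category -/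
noncomputable def descPb : Qpb T S f g sp ⟶ s.pt :=
  ⟨⟨descT0 T S f g sp s, descT0_alg T S f g sp s⟩, descS T S f g sp s, by
    simp only [Monad.forget_map, eqToHom_refl, Category.id_comp]
    erw [eqToHom_refl, Category.id_comp]
    show descT0 T S f g sp s ≫ eqToHom s.pt.w = (descS T S f g sp s).f
    have := epi_πT T S f g sp
    erw [← cancel_epi (eqToHom Y.w ≫ πS.f)]
    erw [Category.assoc (f := eqToHom Y.w) (g := πS.f) (h := (descS T S f g sp s).f)]
    erw [reassoc_of% (descT0_fac T S f g sp s)]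
    have hw := s.π.w
    rw [Monad.forget_map, Monad.forget_map] at hw
    erw [hw]
    have hfac := congrArg Monad.Algebra.Hom.f (descS_fac T S f g sp s)
    simp only [Monad.Algebra.comp_f] at hfac
    erw [hfac]
    rfl⟩

end Desc

noncomputable def coforkPbIsColimit : IsColimit (coforkPb T S f g sp) := by
  have hepiT := epi_πT T S f g sp
  refine Cofork.IsColimit.mk _ (fun s => descPb T S f g sp s) (fun s => ?_) (fun s m hm => ?_)
  · -- fac
    apply pb_hom_ext
    · apply Monad.Algebra.Hom.ext
      show (eqToHom Y.w ≫ πS.f) ≫ descT0 T S f g sp s = s.π.fl.f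
      exact descT0_fac T S f g sp s
    · show πS ≫ descS T S f g sp s = s.π.fr
      exact descS_fac T S f g sp s
  · -- uniq
    have h1 : (eqToHom Y.w ≫ πS.f) ≫ m.fl.f = s.π.fl.f := by
      have h0 := congrArg (fun t => Monad.Algebra.Hom.f (CatPullbackHom.fl t)) hm
      simp only [pb_comp_fl, Monad.Algebra.comp_f] at h0
      exact h0
    have h2 : πS ≫ m.fr = s.π.fr := by
      have h0 := congrArg CatPullbackHom.fr hm
      simp only [pb_comp_fr] at h0
      exact h0
    apply pb_hom_ext
    · apply Monad.Algebra.Hom.ext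
      have := epi_πT T S f g sp
      erw [← cancel_epi (eqToHom Y.w ≫ πS.f)]
      show (eqToHom Y.w ≫ πS.f) ≫ m.fl.f = (eqToHom Y.w ≫ πS.f) ≫ descT0 T S f g sp s
      rw [h1, descT0_fac]
    · apply Cofork.IsColimit.hom_ext sp.isCoequalizer
      show πS ≫ m.fr = πS ≫ descS T S f g sp s
      rw [h2, descS_fac]

noncomputable def coforkPbMapIsColimit :
    IsColimit ((CatPullback.π₂ T.forget S.forget).mapCocone (coforkPb T S f g sp)) := by
  exact (isColimitMapCoconeCoforkEquiv (CatPullback.π₂ T.forget S.forget) _).symm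
    (by exact sp.isCoequalizer)

end Beck


end Aux

/-- If the coproduct `R = T ⊔ S` of two finitary monads on a locally finitely presentable
category is algebraic (i.e. `K^R` is equivalent to the pullback `K^T ×_K K^S` over `K`),
then the projection `K^T ×_K K^S ⥤ K^S` is monadic. -/
theorem stmt2 {K : Type u} [Category.{v} K] (h : LocallyFinitelyPresentable K)
    (T S : CategoryTheory.Monad K) (hT : Monad.Finitary T) (hS : Monad.Finitary S)
    (R : CategoryTheory.Monad K) (hR : Monad.Finitary R)
    (ι₁ : (⟨T, hT⟩ : ObjectProperty.FullSubcategory fun M : CategoryTheory.Monad K =>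
            Monad.Finitary M) ⟶ ⟨R, hR⟩)
    (ι₂ : (⟨S, hS⟩ : ObjectProperty.FullSubcategory fun M : CategoryTheory.Monad K =>
            Monad.Finitary M) ⟶ ⟨R, hR⟩)
    (hcoprod : Nonempty (IsColimit (BinaryCofan.mk ι₁ ι₂)))
    (e : R.Algebra ≌ CatPullback T.forget S.forget)
    (he : e.functor ⋙ CatPullback.diag T.forget S.forget ≅ R.forget) :
    Nonempty (MonadicRightAdjoint (CatPullback.π₂ T.forget S.forget)) := by
  haveI hco : HasColimitsOfSize.{v, v} K := h.1
  haveI : HasColimitsOfSize.{0, 0} K := hasColimitsOfSizeShrink.{0, 0} K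
  haveI hfil : PreservesColimitsOfShape ℕ (R : K ⥤ K) := by
    haveI hpf : PreservesFilteredColimitsOfSize.{v, v} (R : K ⥤ K) := hR
    haveI : IsFiltered (ULiftHom.{v} (ULift.{v} ℕ)) :=
      IsFiltered.of_equivalence (ULiftHomULiftCategory.equiv.{v, v} ℕ)
    haveI : PreservesColimitsOfShape (ULiftHom.{v} (ULift.{v} ℕ)) (R : K ⥤ K) :=
      PreservesFilteredColimitsOfSize.preserves_filtered_colimits _
    exact preservesColimitsOfShape_of_equiv (ULiftHomULiftCategory.equiv.{v, v} ℕ).symm _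
  haveI : ∀ Bs : S.Algebra,
      HasInitial (StructuredArrow Bs (CatPullback.π₂ T.forget S.forget)) := by
    intro Bs
    obtain ⟨L, uB, hL⟩ := univArrow T S e he Bs
    refine IsInitial.hasInitial (X := StructuredArrow.mk uB) ?_
    refine IsInitial.ofUniqueHom (fun Zs => StructuredArrow.homMk (hL Zs.right Zs.hom).choose
      (hL Zs.right Zs.hom).choose_spec.1) ?_
    intro Zs mm
    apply StructuredArrow.hom_ext
    exact (hL Zs.right Zs.hom).choose_spec.2 mm.right (StructuredArrow.w mm)
  haveI hra : (CatPullback.π₂ T.forget S.forget).IsRightAdjoint :=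
    isRightAdjointOfStructuredArrowInitials _
  haveI := pb_reflects_iso T S
  haveI : Monad.HasCoequalizerOfIsSplitPair (CatPullback.π₂ T.forget S.forget) := ⟨by
    intro A B f g hsp
    obtain ⟨Z, πS, ⟨sp0⟩⟩ := hsp.splittable
    have sp : IsSplitCoequalizer f.fr g.fr πS := sp0
    exact HasColimit.mk ⟨_, coforkPbIsColimit T S f g sp⟩⟩
  haveI : Monad.PreservesColimitOfIsSplitPair (CatPullback.π₂ T.forget S.forget) := ⟨by
    intro A B f g hsp
    obtain ⟨Z, πS, ⟨sp0⟩⟩ := hsp.splittable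
    have sp : IsSplitCoequalizer f.fr g.fr πS := sp0
    exact preservesColimit_of_preserves_colimit_cocone (coforkPbIsColimit T S f g sp)
      (coforkPbMapIsColimit T S f g sp)⟩
  exact ⟨Monad.monadicOfHasPreservesGSplitCoequalizersOfReflectsIsomorphisms
    (Adjunction.ofIsRightAdjoint (CatPullback.π₂ T.forget S.forget))⟩


end Formal
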